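/- Let G be an infinite discrete group and μ a finitely supported symmetric probability measure on G whose support generates G. If f ∈ ℓ²(G) satisfies Pf = f, where Pf(x) = ∑_y μ(y) f(xy), then f = 0. -/

import Mathlib

open Function ENNReal

theorem stmt_1 {G : Type*} [Group G] [Infinite G] (μ : G → ℝ) (f : G → ℝ)
    (hμpos : ∀ y, 0 ≤ μ y) (hμfin : (Function.support μ).Finite)
    (hμsum : ∑ᶠ y, μ y = 1)
    (hμsymm : ∀ y, μ y = μ y⁻¹)
    (hμgen : Subgroup.closure (Function.support μ) = ⊤)
    (hf : Memℓp f 2)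
    (hharm : ∀ x, ∑ᶠ y, μ y * f (x * y) = f x) :
    f = 0 := by
  by_contra hne
  obtain ⟨x₀, hx₀⟩ : ∃ x, f x ≠ 0 := by
    by_contra h; push_neg at h; exact hne (funext h)
  -- summability of |f|²
  have hsum2 : Summable fun x => ‖f x‖ ^ (2 : ℝ≥0∞).toReal := by
    rwa [memℓp_gen_iff (by norm_num)] at hf
  -- superlevel sets are finite
  have hfin : ∀ ε : ℝ, 0 < ε → {x | ε ≤ |f x|}.Finite := by
    intro ε hε
    have h0 := hsum2.tendsto_cofinite_zero
    have hev : ∀ᶠ x in Filter.cofinite, ‖f x‖ ^ (2 : ℝ≥0∞).toReal < ε ^ 2 := by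
      have : (0:ℝ) < ε ^ 2 := by positivity
      exact h0.eventually (eventually_lt_nhds this)
    refine (Filter.eventually_cofinite.mp hev).subset ?_
    intro x hx hcon
    rw [show ((2:ℝ≥0∞).toReal) = ((2:ℕ):ℝ) by simp, Real.rpow_natCast,
      Real.norm_eq_abs] at hcon
    have : ε ^ 2 ≤ |f x| ^ 2 := pow_le_pow_left₀ hε.le hx 2
    linarith
  set c := |f x₀| with hc
  have hcpos : 0 < c := abs_pos.mpr hx₀
  have hTfin : {x | c ≤ |f x|}.Finite := hfin c hcpos
  have hTne : x₀ ∈ {x | c ≤ |f x|} := by simp [Set.mem_setOf_eq, hc]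
  -- maximizer x₁
  obtain ⟨x₁, hx₁T, hx₁max⟩ := Set.exists_max_image _ (fun x => |f x|) hTfin ⟨x₀, hTne⟩
  set M := |f x₁| with hMdef
  have hMc : c ≤ M := hx₁T
  have hMpos : 0 < M := lt_of_lt_of_le hcpos hMc
  have hM : ∀ x, |f x| ≤ M := by
    intro x
    by_cases hx : c ≤ |f x|
    · exact hx₁max x hx
    · linarith [not_le.mp hx]
  -- sign normalization
  set ε : ℝ := if 0 < f x₁ then 1 else -1 with hεdef
  have hε1 : ε = 1 ∨ ε = -1 := by unfold ε; split <;> simp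
  set g : G → ℝ := fun x => ε * f x with hgdef
  have hgabs : ∀ x, |g x| = |f x| := by
    intro x
    rcases hε1 with h | h <;> simp [hgdef, h, abs_mul]
  have hgx₁ : g x₁ = M := by
    unfold g ε
    rcases lt_trichotomy 0 (f x₁) with h | h | h
    · simp [h, hMdef, abs_of_pos h]
    · exfalso; rw [hMdef, ← h] at hMpos; simp at hMpos
    · simp [not_lt.mpr h.le, h.not_gt, hMdef, abs_of_neg h]
  have hgM : ∀ x, g x ≤ M := fun x => (le_abs_self _).trans ((hgabs x).le.trans (hM x))
  have hgharm : ∀ x, ∑ᶠ y, μ y * g (x * y) = g x := by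
    intro x
    have hsupp : support (fun y => μ y * f (x * y)) ⊆ support μ := by
      intro y hy
      simp only [mem_support] at hy ⊢
      intro h; apply hy; simp [h]
    have : ∑ᶠ y, μ y * g (x * y) = ε * ∑ᶠ y, μ y * f (x * y) := by
      rw [mul_finsum _ _]
      apply finsum_congr; intro y; ring
    rw [this, hharm]
  -- the set where g attains M
  set A : Set G := {x | g x = M} with hAdef
  have hAsub : A ⊆ {x | c ≤ |f x|} := by
    intro x hx
    have : |f x| = M := by rw [← hgabs, hx]; exact abs_of_pos hMpos
    simpa [this] using hMc
  have hAfin : A.Finite := hTfin.subset hAsub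
  have hx₁A : x₁ ∈ A := hgx₁
  -- propagation of the maximum
  have key : ∀ x ∈ A, ∀ y, μ y ≠ 0 → x * y ∈ A := by
    intro x hx y hy
    set s := hμfin.toFinset with hs
    have hsub : support (fun y => μ y * g (x * y)) ⊆ (s : Set G) := by
      intro z hz
      simp only [mem_support] at hz
      simp only [hs, Set.Finite.coe_toFinset, mem_support]
      intro h; apply hz; simp [h]
    have h2 : ∑ y ∈ s, μ y * g (x * y) = M := by
      rw [← finsum_eq_finset_sum_of_support_subset _ hsub, hgharm, hx]
    have h1 : ∑ y ∈ s, μ y * M = M := by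
      rw [← Finset.sum_mul, ← finsum_eq_sum μ hμfin, hμsum, one_mul]
    have hle : ∀ z ∈ s, μ z * g (x * z) ≤ μ z * M :=
      fun z _ => mul_le_mul_of_nonneg_left (hgM _) (hμpos z)
    have heq := (Finset.sum_eq_sum_iff_of_le hle).mp (h2.trans h1.symm)
    have hys : y ∈ s := by simp [hs, mem_support, hy]
    have := heq y hys
    exact mul_left_cancel₀ hy this
  -- the stabilizer subgroup
  have hmem : ∀ y, (∀ x ∈ A, x * y ∈ A) → ∀ x ∈ A, x * y⁻¹ ∈ A := by
    intro y hy x hx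
    have hmaps : Set.MapsTo (fun x => x * y) A A := fun z hz => hy z hz
    have hinj : Set.InjOn (fun x => x * y) A := fun a _ b _ h => by
      simpa using mul_right_cancel h
    have hbij := (hAfin.injOn_iff_bijOn_of_mapsTo hmaps).mp hinj
    obtain ⟨z, hz, hzy⟩ := hbij.surjOn hx
    simp only at hzy
    have : z = x * y⁻¹ := by rw [← hzy]; group
    rwa [← this]
  let K : Subgroup G :=
  { carrier := {y | ∀ x ∈ A, x * y ∈ A}
    one_mem' := by intro x hx; simpa using hx
    mul_mem' := by
      intro a b ha hb x hx
      rw [← mul_assoc]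
      exact hb _ (ha _ hx)
    inv_mem' := by
      intro a ha
      exact hmem a ha }
  have hKtop : K = ⊤ := by
    rw [← top_le_iff, ← hμgen, Subgroup.closure_le]
    intro y hy
    exact fun x hx => key x hx y hy
  -- A = univ
  have hAuniv : ∀ x, x ∈ A := by
    intro x
    have : (x₁⁻¹ * x) ∈ K := by rw [hKtop]; trivial
    have := this x₁ hx₁A
    rwa [mul_inv_cancel_left] at this
  -- contradiction with finiteness
  have : {x | c ≤ |f x|} = Set.univ := Set.eq_univ_of_univ_subset
    (fun x _ => hAsub (hAuniv x))
  rw [this] at hTfin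
  exact Set.infinite_univ hTfin
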